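/- arXiv:1706.09599 — 2 statements merged into one kernel-verified Lean document; each statement's English description precedes it below -/
import Mathlib

section
/- Let n, m ∈ ℕ, T > 0, L̂ > 0, L_κ ≥ 0, M_V ≥ 0, M_l > 0, and x₀ ∈ ℝⁿ. Let x : [0,T] → ℝⁿ and u : [0,T] → ℝᵐ be continuous functions satisfying ‖x(τ)‖ ≤ ‖x₀‖·exp(L̂τ) and ‖u(τ)‖ ≤ L_κ·‖x(τ)‖ for all τ ∈ [0,T]. Let V : ℝⁿ → ℝ satisfy V(y) ≤ M_V·‖y‖² for all y, and let l : ℝⁿ × ℝᵐ → ℝ satisfy l(y,w) ≤ M_l·(‖y‖² + ‖w‖²) for all (y,w). Then V(x(T)) + ∫₀ᵀ l(x(τ), u(τ)) dτ ≤ M_J·‖x₀‖², where M_J := M_V·exp(2L̂T) + (M_l/(2L̂))·(exp(2L̂T)·(1 + L_κ²) − 1 − L_κ²). -/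
/-- ∫₀ᵀ exp(cτ) dτ = (exp(cT) - 1)/c. -/
lemma integral_exp_mul_aux (c T : ℝ) (hc : c ≠ 0) :
    ∫ τ in (0:ℝ)..T, Real.exp (c * τ) = (Real.exp (c * T) - 1) / c := by
  have := intervalIntegral.integral_comp_mul_left (fun x => Real.exp x) hc (a := 0) (b := T)
  rw [this]
  simp [integral_exp, smul_eq_mul]
  ring

/-- Quadratic upper bound `J*(x₀) ≤ M_J ‖x₀‖²` on the MPC cost functional
`J = V(x(T)) + ∫₀ᵀ l(x(τ),u(τ)) dτ`, where
`M_J = M_V e^{2L̂T} + (M_l/(2L̂))(e^{2L̂T}(1+L_κ²) − 1 − L_κ²)`. -/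
theorem cost_quadratic_upper_bound
    (n m : ℕ) (T Lhat Lk MV Ml : ℝ)
    (hT : 0 < T) (hLhat : 0 < Lhat) (hLk : 0 ≤ Lk) (hMV : 0 ≤ MV) (hMl : 0 < Ml)
    (x₀ : EuclideanSpace ℝ (Fin n))
    (x : ℝ → EuclideanSpace ℝ (Fin n)) (u : ℝ → EuclideanSpace ℝ (Fin m))
    (hx : ContinuousOn x (Set.Icc 0 T)) (hu : ContinuousOn u (Set.Icc 0 T))
    (hxb : ∀ τ ∈ Set.Icc (0 : ℝ) T, ‖x τ‖ ≤ ‖x₀‖ * Real.exp (Lhat * τ))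
    (hub : ∀ τ ∈ Set.Icc (0 : ℝ) T, ‖u τ‖ ≤ Lk * ‖x τ‖)
    (V : EuclideanSpace ℝ (Fin n) → ℝ)
    (hV : ∀ y, V y ≤ MV * ‖y‖ ^ 2)
    (l : EuclideanSpace ℝ (Fin n) × EuclideanSpace ℝ (Fin m) → ℝ)
    (hl : ∀ y w, l (y, w) ≤ Ml * (‖y‖ ^ 2 + ‖w‖ ^ 2))
    (hint : IntervalIntegrable (fun τ => l (x τ, u τ)) MeasureTheory.volume 0 T) :
    V (x T) + ∫ τ in (0 : ℝ)..T, l (x τ, u τ) ≤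
      (MV * Real.exp (2 * Lhat * T) +
        Ml / (2 * Lhat) * (Real.exp (2 * Lhat * T) * (1 + Lk ^ 2) - 1 - Lk ^ 2)) * ‖x₀‖ ^ 2 := by
  have hc : (2 * Lhat) ≠ 0 := by positivity
  set C : ℝ := Ml * (1 + Lk ^ 2) * ‖x₀‖ ^ 2 with hC
  have hCnn : 0 ≤ C := by positivity
  -- pointwise bound on the integrand
  have hpt : ∀ τ ∈ Set.Icc (0:ℝ) T,
      l (x τ, u τ) ≤ C * Real.exp (2 * Lhat * τ) := by
    intro τ hτ
    have h1 := hxb τ hτ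
    have h2 := hub τ hτ
    have hxpos : (0:ℝ) ≤ ‖x τ‖ := norm_nonneg _
    have hx2 : ‖x τ‖ ^ 2 ≤ ‖x₀‖ ^ 2 * Real.exp (2 * Lhat * τ) := by
      calc ‖x τ‖ ^ 2 ≤ (‖x₀‖ * Real.exp (Lhat * τ)) ^ 2 := by
            apply pow_le_pow_left₀ hxpos h1
        _ = ‖x₀‖ ^ 2 * Real.exp (2 * Lhat * τ) := by
            rw [mul_pow, ← Real.exp_nat_mul]; ring_nf
    have hu2 : ‖u τ‖ ^ 2 ≤ Lk ^ 2 * ‖x τ‖ ^ 2 := by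
      calc ‖u τ‖ ^ 2 ≤ (Lk * ‖x τ‖) ^ 2 := pow_le_pow_left₀ (norm_nonneg _) h2 2
        _ = Lk ^ 2 * ‖x τ‖ ^ 2 := by ring
    calc l (x τ, u τ) ≤ Ml * (‖x τ‖ ^ 2 + ‖u τ‖ ^ 2) := hl _ _
      _ ≤ Ml * ((1 + Lk ^ 2) * ‖x τ‖ ^ 2) := by
          have : ‖x τ‖ ^ 2 + ‖u τ‖ ^ 2 ≤ (1 + Lk ^ 2) * ‖x τ‖ ^ 2 := by nlinarith
          exact mul_le_mul_of_nonneg_left this hMl.le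
      _ ≤ Ml * ((1 + Lk ^ 2) * (‖x₀‖ ^ 2 * Real.exp (2 * Lhat * τ))) := by
          have h1k : (0:ℝ) ≤ 1 + Lk ^ 2 := by positivity
          exact mul_le_mul_of_nonneg_left (mul_le_mul_of_nonneg_left hx2 h1k) hMl.le
      _ = C * Real.exp (2 * Lhat * τ) := by rw [hC]; ring
  -- integrability of the bounding function
  have hgint : IntervalIntegrable (fun τ => C * Real.exp (2 * Lhat * τ))
      MeasureTheory.volume 0 T := by
    apply Continuous.intervalIntegrable
    continuity
  -- integral bound
  have hIb : (∫ τ in (0:ℝ)..T, l (x τ, u τ)) ≤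
      ∫ τ in (0:ℝ)..T, C * Real.exp (2 * Lhat * τ) := by
    apply intervalIntegral.integral_mono_on hT.le hint hgint
    intro τ hτ; exact hpt τ hτ
  have hIval : (∫ τ in (0:ℝ)..T, C * Real.exp (2 * Lhat * τ))
      = C * ((Real.exp (2 * Lhat * T) - 1) / (2 * Lhat)) := by
    rw [intervalIntegral.integral_const_mul, integral_exp_mul_aux _ _ hc]
  -- terminal cost bound
  have hVb : V (x T) ≤ MV * Real.exp (2 * Lhat * T) * ‖x₀‖ ^ 2 := by
    have h1 := hxb T ⟨hT.le, le_refl T⟩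
    calc V (x T) ≤ MV * ‖x T‖ ^ 2 := hV _
      _ ≤ MV * (‖x₀‖ * Real.exp (Lhat * T)) ^ 2 := by
          exact mul_le_mul_of_nonneg_left (pow_le_pow_left₀ (norm_nonneg _) h1 2) hMV
      _ = MV * Real.exp (2 * Lhat * T) * ‖x₀‖ ^ 2 := by
          rw [mul_pow, ← Real.exp_nat_mul]; ring_nf
  have key : C * ((Real.exp (2 * Lhat * T) - 1) / (2 * Lhat))
      = Ml / (2 * Lhat) * (Real.exp (2 * Lhat * T) * (1 + Lk ^ 2) - 1 - Lk ^ 2) * ‖x₀‖ ^ 2 := by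
    rw [hC]; field_simp; ring
  linarith [hIb, hIval ▸ hIb]
end

section
/- Let n, m ∈ ℕ, T > 0, 0 < Δt ≤ T, L̂ > 0, m_l > 0, M_J > 0, and x₀ ∈ ℝⁿ. Let x : [0,T] → ℝⁿ and u : [0,T] → ℝᵐ be continuous with ‖x(τ)‖ ≥ ‖x₀‖·exp(−L̂τ) for all τ ∈ [0,T], let l : ℝⁿ × ℝᵐ → ℝ satisfy l(y,w) ≥ m_l·‖y‖² for all (y,w), and let J be a real number with 0 ≤ J ≤ M_J·‖x₀‖². Then ∫₀^{Δt} l(x(τ), u(τ)) dτ ≥ a·J, where a := m_l·(1 − exp(−2L̂Δt)) / (2L̂·M_J). -/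
/-- The cost accumulated over one sampling interval `[0,Δt]` is at least the
fraction `a = m_l (1 − e^{−2L̂Δt})/(2 L̂ M_J)` of the optimal cost `J ≤ M_J‖x₀‖²`. -/
theorem integral_cost_lower_bound_sampling_interval
    (n m : ℕ) (T Δt Lhat ml MJ : ℝ)
    (hT : 0 < T) (hΔt : 0 < Δt) (hΔtT : Δt ≤ T) (hLhat : 0 < Lhat)
    (hml : 0 < ml) (hMJ : 0 < MJ)
    (x₀ : EuclideanSpace ℝ (Fin n))
    (x : ℝ → EuclideanSpace ℝ (Fin n)) (u : ℝ → EuclideanSpace ℝ (Fin m))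
    (hx : ContinuousOn x (Set.Icc 0 T)) (hu : ContinuousOn u (Set.Icc 0 T))
    (hxb : ∀ τ ∈ Set.Icc (0 : ℝ) T, ‖x₀‖ * Real.exp (-Lhat * τ) ≤ ‖x τ‖)
    (l : EuclideanSpace ℝ (Fin n) × EuclideanSpace ℝ (Fin m) → ℝ)
    (hl : ∀ y w, ml * ‖y‖ ^ 2 ≤ l (y, w))
    (J : ℝ) (hJ0 : 0 ≤ J) (hJ : J ≤ MJ * ‖x₀‖ ^ 2)
    (hint : IntervalIntegrable (fun τ => l (x τ, u τ)) MeasureTheory.volume 0 Δt) :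
    ml * (1 - Real.exp (-2 * Lhat * Δt)) / (2 * Lhat * MJ) * J ≤
      ∫ τ in (0 : ℝ)..Δt, l (x τ, u τ) := by
  have hsub : Set.Icc (0:ℝ) Δt ⊆ Set.Icc 0 T :=
    Set.Icc_subset_Icc le_rfl hΔtT
  -- integrability of the exponential lower bound
  have hg : ∀ τ ∈ Set.Icc (0:ℝ) Δt,
      ml * (‖x₀‖ ^ 2 * Real.exp (-2 * Lhat * τ)) ≤ l (x τ, u τ) := by
    intro τ hτ
    refine le_trans ?_ (hl (x τ) (u τ))
    have h1 := hxb τ (hsub hτ)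
    have h2 : (‖x₀‖ * Real.exp (-Lhat * τ)) ^ 2 ≤ ‖x τ‖ ^ 2 := by
      apply pow_le_pow_left₀ (by positivity) h1
    have h3 : (‖x₀‖ * Real.exp (-Lhat * τ)) ^ 2
        = ‖x₀‖ ^ 2 * Real.exp (-2 * Lhat * τ) := by
      rw [mul_pow, ← Real.exp_nat_mul]
      ring_nf
    nlinarith [h2, h3]
  have hcont : ContinuousOn (fun τ => ml * (‖x₀‖ ^ 2 * Real.exp (-2 * Lhat * τ)))
      (Set.Icc (0:ℝ) Δt) := by fun_prop
  have hint2 : IntervalIntegrable (fun τ => ml * (‖x₀‖ ^ 2 * Real.exp (-2 * Lhat * τ)))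
      MeasureTheory.volume 0 Δt := hcont.intervalIntegrable_of_Icc hΔt.le
  have hmono : ∫ τ in (0:ℝ)..Δt, ml * (‖x₀‖ ^ 2 * Real.exp (-2 * Lhat * τ))
      ≤ ∫ τ in (0:ℝ)..Δt, l (x τ, u τ) := by
    apply intervalIntegral.integral_mono_on hΔt.le hint2 hint
    intro τ hτ; exact hg τ hτ
  -- compute the exponential integral
  have hexp : ∫ τ in (0:ℝ)..Δt, Real.exp (-2 * Lhat * τ)
      = (1 - Real.exp (-2 * Lhat * Δt)) / (2 * Lhat) := by
    have hc : (-2 * Lhat) ≠ 0 := by nlinarith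
    rw [show (fun τ => Real.exp (-2 * Lhat * τ)) = fun τ => Real.exp ((-2*Lhat) * τ) from rfl]
    rw [intervalIntegral.integral_comp_mul_left Real.exp hc, integral_exp]
    field_simp
    ring_nf
    rw [Real.exp_zero]
    linear_combination (1 - Real.exp (-(Lhat * Δt * 2))) * mul_inv_cancel₀ hLhat.ne'
  have hcalc : ∫ τ in (0:ℝ)..Δt, ml * (‖x₀‖ ^ 2 * Real.exp (-2 * Lhat * τ))
      = ml * ‖x₀‖ ^ 2 * ((1 - Real.exp (-2 * Lhat * Δt)) / (2 * Lhat)) := by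
    rw [intervalIntegral.integral_const_mul, intervalIntegral.integral_const_mul, hexp]
    ring
  refine le_trans ?_ hmono
  rw [hcalc]
  have hexple : Real.exp (-2 * Lhat * Δt) ≤ 1 := by
    apply Real.exp_le_one_iff.mpr; nlinarith
  have ha : 0 ≤ ml * (1 - Real.exp (-2 * Lhat * Δt)) / (2 * Lhat * MJ) :=
    div_nonneg (mul_nonneg hml.le (by linarith)) (by positivity)
  calc ml * (1 - Real.exp (-2 * Lhat * Δt)) / (2 * Lhat * MJ) * J
      ≤ ml * (1 - Real.exp (-2 * Lhat * Δt)) / (2 * Lhat * MJ) * (MJ * ‖x₀‖ ^ 2) := by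
        exact mul_le_mul_of_nonneg_left hJ ha
    _ = ml * ‖x₀‖ ^ 2 * ((1 - Real.exp (-2 * Lhat * Δt)) / (2 * Lhat)) := by
        field_simp
end
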